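/- If H^∞_v(G) is a nontrivial Banach space, then the boundary ∂G of G is contained in the closure of E_v in ℂ. -/

import Mathlib

open Complex Metric Set Filter Topology MeasureTheory

noncomputable section

/-- `f` is holomorphic on `G` and `sup_{z in G} v z * |f z| < ∞`. -/
def MemHv (G : Set ℂ) (v : ℂ → ℝ) (f : ℂ → ℂ) : Prop :=
  DifferentiableOn ℂ f G ∧ ∃ C : ℝ, ∀ z ∈ G, v z * ‖f z‖ ≤ C

/-- The weighted sup-seminorm `‖f‖_v`. -/
def HvNorm (G : Set ℂ) (v : ℂ → ℝ) (f : ℂ → ℂ) : ℝ :=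
  sSup ((fun z => v z * ‖f z‖) '' G)

/-- A `‖·‖_v`-Cauchy sequence. -/
def HvCauchy (G : Set ℂ) (v : ℂ → ℝ) (F : ℕ → ℂ → ℂ) : Prop :=
  ∀ ε : ℝ, 0 < ε → ∃ N : ℕ, ∀ m ≥ N, ∀ n ≥ N, ∀ z ∈ G,
    v z * ‖F m z - F n z‖ ≤ ε

/-- Convergence in the `‖·‖_v`-seminorm. -/
def HvTendsto (G : Set ℂ) (v : ℂ → ℝ) (F : ℕ → ℂ → ℂ) (f : ℂ → ℂ) : Prop :=
  ∀ ε : ℝ, 0 < ε → ∃ N : ℕ, ∀ n ≥ N, ∀ z ∈ G,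
    v z * ‖F n z - f z‖ ≤ ε

/-- Completeness of `H^∞_v(G)`: every Cauchy sequence converges in the space. -/
def HvComplete (G : Set ℂ) (v : ℂ → ℝ) : Prop :=
  ∀ F : ℕ → ℂ → ℂ, (∀ n, MemHv G v (F n)) → HvCauchy G v F →
    ∃ f : ℂ → ℂ, MemHv G v f ∧ HvTendsto G v F f

/-- The seminorm `‖·‖_v` is a norm: `‖f‖_v = 0` forces `f = 0` on `G`. -/
def HvNormed (G : Set ℂ) (v : ℂ → ℝ) : Prop :=
  ∀ f : ℂ → ℂ, MemHv G v f → (∀ z ∈ G, v z * ‖f z‖ = 0) →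
    ∀ z ∈ G, f z = 0

/-- `H^∞_v(G)` is a Banach space. -/
def IsBanachHv (G : Set ℂ) (v : ℂ → ℝ) : Prop :=
  HvNormed G v ∧ HvComplete G v

/-- Geometric tail bound. -/
lemma aux_geom_tail (x : ℂ) (hx : ‖x‖ ≤ 1/2) (n m : ℕ) :
    ‖∑ k ∈ Finset.Ico n m, x ^ (k + 1)‖ ≤ (1/2 : ℝ) ^ n := by
  calc ‖∑ k ∈ Finset.Ico n m, x ^ (k + 1)‖
      ≤ ∑ k ∈ Finset.Ico n m, ‖x ^ (k + 1)‖ :=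
        norm_sum_le _ _
    _ ≤ ∑ k ∈ Finset.Ico n m, (1/2 : ℝ) ^ (k + 1) := by
        refine Finset.sum_le_sum fun k _ => ?_
        rw [norm_pow]
        exact pow_le_pow_left₀ (norm_nonneg _) hx _
    _ = ∑ j ∈ Finset.range (m - n), (1/2 : ℝ) ^ (n + j + 1) := by
        rw [Finset.sum_Ico_eq_sum_range]
    _ = (1/2 : ℝ) ^ (n + 1) * ∑ j ∈ Finset.range (m - n), (1/2 : ℝ) ^ j := by
        rw [Finset.mul_sum]
        exact Finset.sum_congr rfl fun j _ => by ring
    _ ≤ (1/2 : ℝ) ^ (n + 1) * 2 := by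
        refine mul_le_mul_of_nonneg_left (sum_geometric_two_le _) (by positivity)
    _ = (1/2 : ℝ) ^ n := by ring

theorem stmt10 (G : Set ℂ) (v : ℂ → ℝ) (hG : IsOpen G) (hGc : IsConnected G)
    (hv : ∀ z ∈ G, 0 ≤ v z) (hB : IsBanachHv G v)
    (hne : ∃ f : ℂ → ℂ, MemHv G v f ∧ ∃ z ∈ G, f z ≠ 0) :
    frontier G ⊆ closure {w ∈ G | 0 < v w} := by
  intro ζ hζ
  by_contra hcl
  obtain ⟨f, ⟨hfd, C, hC⟩, z0, hz0G, hz0⟩ := hne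
  have hζG : ζ ∉ G := fun h => hζ.2 (by rwa [hG.interior_eq])
  have hζcl : ζ ∈ closure G := hζ.1
  rw [Metric.mem_closure_iff] at hcl
  push_neg at hcl
  obtain ⟨r, hr, hrE⟩ := hcl
  have hC0 : 0 ≤ C :=
    le_trans (mul_nonneg (hv z0 hz0G) (norm_nonneg _)) (hC z0 hz0G)
  -- points of positive weight are at distance ≥ r from ζ
  have hEr : ∀ z ∈ G, 0 < v z → r ≤ ‖z - ζ‖ := by
    intro z hz hvz
    have := hrE z ⟨hz, hvz⟩
    rwa [dist_comm, Complex.dist_eq] at this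
  have hzζ : ∀ z ∈ G, z - ζ ≠ 0 := fun z hz =>
    sub_ne_zero.mpr fun h => hζG (h ▸ hz)
  -- find p ∈ G near ζ with f p ≠ 0
  obtain ⟨q, hqG, hqd⟩ := Metric.mem_closure_iff.mp hζcl (r/2) (by linarith)
  have hUo : IsOpen (G ∩ Metric.ball ζ (r/2)) := hG.inter Metric.isOpen_ball
  have hqU : q ∈ G ∩ Metric.ball ζ (r/2) :=
    ⟨hqG, by rw [Metric.mem_ball, dist_comm]; exact hqd⟩
  have hp : ∃ p ∈ G ∩ Metric.ball ζ (r/2), f p ≠ 0 := by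
    by_contra hp
    push_neg at hp
    have hev : f =ᶠ[nhds q] 0 := Filter.eventuallyEq_of_mem (hUo.mem_nhds hqU) hp
    have := (hfd.analyticOnNhd hG).eqOn_zero_of_preconnected_of_eventuallyEq_zero
      hGc.isPreconnected hqG hev
    exact hz0 (this hz0G)
  obtain ⟨p, ⟨hpG, hpb⟩, hfp⟩ := hp
  set c : ℂ := p - ζ with hcdef
  have hc0 : c ≠ 0 := sub_ne_zero.mpr fun h => hζG (h ▸ hpG)
  have hcabs : ‖c‖ < r/2 := by
    have := Metric.mem_ball.mp hpb
    rwa [Complex.dist_eq] at this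
  -- the weight-positive points see |c/(z-ζ)| ≤ 1/2
  have hx12 : ∀ z ∈ G, 0 < v z → ‖c / (z - ζ)‖ ≤ 1/2 := by
    intro z hz hvz
    rw [norm_div]
    have h1 : r ≤ ‖z - ζ‖ := hEr z hz hvz
    have h2 : (r/2) / r = 1/2 := by field_simp
    calc ‖c‖ / ‖z - ζ‖ ≤ (r/2) / r :=
          div_le_div₀ (by linarith) hcabs.le hr h1
      _ = 1/2 := h2
  -- the Cauchy sequence of partial sums
  set F : ℕ → ℂ → ℂ :=
    fun N z => f z * ∑ k ∈ Finset.range N, (c / (z - ζ)) ^ (k + 1) with hFdef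
  have hFd : ∀ N, DifferentiableOn ℂ (F N) G := by
    intro N
    refine hfd.mul (DifferentiableOn.fun_sum fun k _ => ?_)
    exact ((differentiableOn_const c).div
      (differentiableOn_id.sub (differentiableOn_const ζ)) (hzζ)).pow _
  -- key difference estimate
  have hdiff : ∀ m n : ℕ, n ≤ m → ∀ z ∈ G,
      v z * ‖F m z - F n z‖ ≤ C * (1/2 : ℝ) ^ n := by
    intro m n hnm z hz
    rcases (hv z hz).lt_or_eq with hvz | hvz
    · have key : F m z - F n z
          = f z * ∑ k ∈ Finset.Ico n m, (c / (z - ζ)) ^ (k + 1) := by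
        rw [hFdef]
        rw [Finset.sum_Ico_eq_sub _ hnm]
        ring
      rw [key, norm_mul, ← mul_assoc]
      exact mul_le_mul (hC z hz) (aux_geom_tail _ (hx12 z hz hvz) n m)
        (norm_nonneg _) hC0
    · rw [← hvz, zero_mul]
      positivity
  have hFmem : ∀ N, MemHv G v (F N) := by
    intro N
    refine ⟨hFd N, C, fun z hz => ?_⟩
    have := hdiff N 0 (Nat.zero_le N) z hz
    simpa [hFdef] using this
  have hFcauchy : HvCauchy G v F := by
    intro ε hε
    obtain ⟨N, hN⟩ := exists_pow_lt_of_lt_one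
      (show (0:ℝ) < ε / (C + 1) by positivity) (show (1/2 : ℝ) < 1 by norm_num)
    refine ⟨N, fun m hm n hn z hz => ?_⟩
    have hb : ∀ k : ℕ, N ≤ k → C * (1/2 : ℝ) ^ k ≤ ε := by
      intro k hk
      have h1 : (1/2 : ℝ) ^ k ≤ (1/2 : ℝ) ^ N :=
        pow_le_pow_of_le_one (by norm_num) (by norm_num) hk
      have h2 : C * (1/2 : ℝ) ^ k ≤ (C + 1) * (1/2 : ℝ) ^ N := by
        have : (0:ℝ) ≤ (1/2:ℝ)^k := by positivity
        nlinarith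
      have h3 : (C + 1) * (1/2 : ℝ) ^ N ≤ (C + 1) * (ε / (C + 1)) := by
        have : (0:ℝ) < C + 1 := by linarith
        nlinarith [hN]
      have h4 : (C + 1) * (ε / (C + 1)) = ε := by field_simp
      linarith
    rcases le_total n m with h | h
    · exact le_trans (hdiff m n h z hz) (hb n hn)
    · rw [← norm_neg, neg_sub]
      exact le_trans (hdiff n m h z hz) (hb m hm)
  obtain ⟨g, hgmem, hgt⟩ := hB.2 F hFmem hFcauchy
  -- pointwise identification of g on the positivity set
  have hgeq : ∀ z ∈ G, 0 < v z → g z = f z * (c / (z - p)) := by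
    intro z hz hvz
    have hzp : z - p ≠ 0 := by
      intro h
      have h1 : r ≤ ‖z - ζ‖ := hEr z hz hvz
      rw [sub_eq_zero] at h
      rw [h] at h1
      have h3 : ‖p - ζ‖ < r / 2 := by simpa [hcdef] using hcabs
      linarith
    have T1 : Tendsto (fun n => F n z) atTop (𝓝 (g z)) := by
      rw [Metric.tendsto_atTop]
      intro ε hε
      obtain ⟨N, hN⟩ := hgt (v z * (ε / 2)) (by positivity)
      refine ⟨N, fun n hn => ?_⟩
      have h1 := hN n hn z hz
      have h2 : ‖F n z - g z‖ ≤ ε / 2 :=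
        le_of_mul_le_mul_left h1 hvz
      rw [Complex.dist_eq]
      linarith
    have hx1 : ‖c / (z - ζ)‖ < 1 := by
      linarith [hx12 z hz hvz]
    have hs : HasSum (fun k : ℕ => (c / (z - ζ)) ^ (k + 1))
        ((c / (z - ζ)) * (1 - c / (z - ζ))⁻¹) := by
      have := (hasSum_geometric_of_norm_lt_one hx1).mul_left (c / (z - ζ))
      refine this.congr_fun fun k => ?_
      rw [pow_succ']
    have T2 : Tendsto (fun n => F n z) atTop
        (𝓝 (f z * ((c / (z - ζ)) * (1 - c / (z - ζ))⁻¹))) := by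
      exact hs.tendsto_sum_nat.const_mul (f z)
    have he : (c / (z - ζ)) * (1 - c / (z - ζ))⁻¹ = c / (z - p) := by
      have h1 : z - ζ ≠ 0 := hzζ z hz
      have h2 : (1 : ℂ) - c / (z - ζ) = (z - p) / (z - ζ) := by
        rw [hcdef]; field_simp; ring
      rw [h2]
      field_simp
    rw [he] at T2
    exact tendsto_nhds_unique T1 T2
  -- the function (z - p) * g z - c * f z is in H_v with zero norm
  set D : ℂ → ℂ := fun z => (z - p) * g z - c * f z with hDdef
  have hD0 : ∀ z ∈ G, v z * ‖D z‖ = 0 := by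
    intro z hz
    rcases (hv z hz).lt_or_eq with hvz | hvz
    · have hzp : z - p ≠ 0 := by
        intro h
        have h1 : r ≤ ‖z - ζ‖ := hEr z hz hvz
        rw [sub_eq_zero] at h
        rw [h] at h1
        have : ‖p - ζ‖ < r/2 := hcabs
        linarith
      have : D z = 0 := by
        rw [hDdef]
        simp only
        rw [hgeq z hz hvz]
        field_simp
        ring
      rw [this]
      simp
    · rw [← hvz, zero_mul]
  have hDmem : MemHv G v D := by
    constructor
    · exact ((differentiableOn_id.sub (differentiableOn_const p)).mul hgmem.1).sub
        ((differentiableOn_const c).mul hfd)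
    · exact ⟨0, fun z hz => le_of_eq (hD0 z hz)⟩
  have := hB.1 D hDmem hD0 p hpG
  rw [hDdef] at this
  simp only [sub_self, zero_mul, zero_sub, neg_eq_zero, mul_eq_zero] at this
  rcases this with h | h
  · exact hc0 h
  · exact hfp h
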